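/- Let τ > 0 and assume Λ ≥ Λ^crit_per := ((cosh(μ_Sτ) − 1)/(μ_Sτ²))·(1/(eβγ))·min{2N_M, 2N_F, max{r,1−r}·max{N_M/r, N_F/(1−r)}}. Then every solution of the τ-periodic SIT system with nonnegative initial data converges exponentially to (0,0): if M, F : [0,∞) → ℝ are continuously differentiable, nonnegative, and satisfy M'(t) = rρ·(F(t)M(t)/(M(t)+γM_S^per(t)))·e^{−β(M(t)+F(t))} − μ_M M(t) and F'(t) = (1−r)ρ·(F(t)M(t)/(M(t)+γM_S^per(t)))·e^{−β(M(t)+F(t))} − μ_F F(t) for all t ≥ 0, then there exist constants C > 0 and ε > 0 such that M(t) + F(t) ≤ C e^{−εt} for all t ≥ 0. -/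

import Mathlib

open Real Set


/-- `y * exp (-(β*y)) ≤ 1/(e*β)` for `y ≥ 0`. -/
lemma xexp_le {β y : ℝ} (hβ : 0 < β) (hy : 0 ≤ y) :
    y * Real.exp (-(β * y)) ≤ 1 / (Real.exp 1 * β) := by
  have h1 : β * y ≤ Real.exp (β * y - 1) := by
    have := Real.add_one_le_exp (β * y - 1); linarith
  have h2 : Real.exp (β * y - 1) = Real.exp (β*y) / Real.exp 1 := by
    rw [Real.exp_sub]
  have h3 : Real.exp (-(β*y)) = 1 / Real.exp (β*y) := by
    rw [Real.exp_neg]; ring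
  rw [h3]
  rw [h2] at h1
  have hE := Real.exp_pos (β*y)
  have he1 := Real.exp_pos 1
  rw [mul_one_div, div_le_div_iff₀ (by positivity) (by positivity)]
  have h4 : (β * y) * Real.exp 1 ≤ Real.exp (β*y) := by
    have := mul_le_mul_of_nonneg_right h1 he1.le
    calc (β * y) * Real.exp 1 ≤ (Real.exp (β*y) / Real.exp 1) * Real.exp 1 := this
      _ = Real.exp (β*y) := by field_simp
  nlinarith
lemma uexp_le {u : ℝ} (hu0 : 0 ≤ u) (hu : u ≤ 1/2) :
    u * Real.exp (-u) ≤ Real.exp (-(1/2 : ℝ)) / 2 := by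
  set s : ℝ := 1/2 - u with hs
  have hs0 : 0 ≤ s := by simp [hs]; linarith
  have h1 : 1 - s ≤ Real.exp (-s) := by have := Real.add_one_le_exp (-s); linarith
  -- (1-s) * exp s ≤ 1
  have h2 : (1 - s) * Real.exp s ≤ 1 := by
    have := mul_le_mul_of_nonneg_right h1 (Real.exp_pos s).le
    rwa [← Real.exp_add, neg_add_cancel, Real.exp_zero] at this
  -- u * exp(-u) ≤ (1/2) e^{-1/2}  ⇔  2u e^{1/2 - u} ≤ 1
  have hgoal : 2 * u * Real.exp s ≤ 1 := by
    have h3 : 2 * u = 1 - 2*s := by simp [hs]; ring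
    nlinarith [Real.exp_pos s]
  have hxe : Real.exp (-u) = Real.exp (-(1/2:ℝ)) * Real.exp s := by
    rw [← Real.exp_add]; congr 1; simp [hs]; ring
  rw [hxe]
  have hE := Real.exp_pos (-(1/2:ℝ))
  nlinarith [Real.exp_pos s]
lemma exp_half_lt_two : Real.exp (-(1/2:ℝ)) * Real.exp 1 < 2 := by
  have h : Real.exp (-(1/2:ℝ)) * Real.exp 1 = Real.exp (1/2) := by
    rw [← Real.exp_add]; norm_num
  rw [h]
  have h2 : Real.exp (1/2) * Real.exp (1/2) = Real.exp 1 := by rw [← Real.exp_add]; norm_num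
  nlinarith [Real.exp_pos (1/2 : ℝ), Real.exp_one_lt_d9]


noncomputable def Afun (q τ κ t : ℝ) : ℝ :=
  κ * ((Real.exp (q*τ) - 1) * (t/τ)
    + (Real.exp (q*τ*Int.fract (t/τ)) - 1 - (Real.exp (q*τ) - 1) * Int.fract (t/τ)))

noncomputable def aafun (q τ κ t : ℝ) : ℝ := κ * q * Real.exp (q*τ*Int.fract (t/τ))

lemma Afun_zero (q τ κ : ℝ) : Afun q τ κ 0 = 0 := by
  simp [Afun]

lemma aafun_pos {q τ κ : ℝ} (hq : 0 < q) (hκ : 0 < κ) (t : ℝ) : 0 < aafun q τ κ t := by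
  unfold aafun; positivity

lemma Afun_cont {q τ κ : ℝ} (hτ : 0 < τ) : Continuous (Afun q τ κ) := by
  unfold Afun
  apply Continuous.mul continuous_const
  apply Continuous.add
  · exact (continuous_const.mul (continuous_id.div_const τ))
  · have hφ : Continuous ((fun u : ℝ => Real.exp (q*τ*u) - 1 - (Real.exp (q*τ) - 1) * u)
        ∘ Int.fract) := by
      apply ContinuousOn.comp_fract''
      · exact ((Real.continuous_exp.comp (continuous_const.mul continuous_id)).sub
          continuous_const |>.sub (continuous_const.mul continuous_id)).continuousOn
      · simp
    exact hφ.comp (continuous_id.div_const τ)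

lemma Afun_deriv {q τ κ : ℝ} (hτ : 0 < τ) (t : ℝ) :
    HasDerivWithinAt (Afun q τ κ) (aafun q τ κ t) (Ici t) t := by
  set n : ℤ := ⌊t/τ⌋ with hn
  have hfl := Int.floor_le (t/τ)
  have hfu := Int.lt_floor_add_one (t/τ)
  have htb : t < ((n:ℝ)+1)*τ := by
    rw [← div_lt_iff₀ hτ]; exact_mod_cast hfu
  set g : ℝ → ℝ := fun s => κ * ((Real.exp (q*τ) - 1) * (n:ℝ)
      + (Real.exp (q*(s - (n:ℝ)*τ)) - 1)) with hg
  have hgd : HasDerivAt g (κ * q * Real.exp (q*(t - (n:ℝ)*τ))) t := by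
    have h1 : HasDerivAt (fun s : ℝ => q*(s - (n:ℝ)*τ)) q t := by
      simpa using ((hasDerivAt_id t).sub_const ((n:ℝ)*τ)).const_mul q
    have h2 := h1.exp
    have h3 := (h2.sub_const 1).const_add ((Real.exp (q*τ) - 1) * (n:ℝ))
    have h4 := h3.const_mul κ
    refine h4.congr_deriv ?_
    ring
  have hval : ∀ s, (n:ℝ) ≤ s/τ → s/τ < (n:ℝ)+1 → Afun q τ κ s = g s := by
    intro s h1 h2
    have hfls : ⌊s/τ⌋ = n := by
      rw [Int.floor_eq_iff]; exact ⟨h1, h2⟩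
    have hfr : Int.fract (s/τ) = s/τ - (n:ℝ) := by
      rw [Int.fract, hfls]
    have hq1 : q*τ*(s/τ - (n:ℝ)) = q*(s - (n:ℝ)*τ) := by
      field_simp
    simp only [Afun, hg, hfr, hq1]
    ring
  have heq : Afun q τ κ =ᶠ[nhdsWithin t (Ici t)] g := by
    have hmem : Ico t (((n:ℝ)+1)*τ) ∈ nhdsWithin t (Ici t) :=
      Ico_mem_nhdsGE_of_mem ⟨le_refl t, htb⟩
    filter_upwards [hmem] with s hs
    apply hval
    · calc (n:ℝ) ≤ t/τ := hfl
        _ ≤ s/τ := by gcongr; exact hs.1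
    · rw [div_lt_iff₀ hτ]; exact hs.2
  have hteq : Afun q τ κ t = g t := by
    apply hval <;> [exact hfl; exact_mod_cast hfu]
  have haa : aafun q τ κ t = κ * q * Real.exp (q*(t - (n:ℝ)*τ)) := by
    have hfr : Int.fract (t/τ) = t/τ - (n:ℝ) := by rw [Int.fract, hn]
    have hq1 : q*τ*(t/τ - (n:ℝ)) = q*(t - (n:ℝ)*τ) := by field_simp
    rw [aafun, hfr, hq1]
  rw [haa]
  exact hgd.hasDerivWithinAt.congr_of_eventuallyEq heq hteq

lemma Afun_incr {q τ κ μ : ℝ} (hτ : 0 < τ) (hq : 0 < q) (hκ : 0 ≤ κ) (hμ : 0 ≤ μ)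
    (hcond : κ*(Real.exp (q*τ) - 1) ≤ μ*τ) {s t : ℝ} (hst : s ≤ t) :
    Afun q τ κ t - Afun q τ κ s ≤ μ*(t-s) + 2*(μ*τ) := by
  have hE1 : (1:ℝ) ≤ Real.exp (q*τ) := by
    rw [← Real.exp_zero]; apply Real.exp_le_exp.2; positivity
  have hbound : ∀ u : ℝ, 0 ≤ u → u < 1 →
      |Real.exp (q*τ*u) - 1 - (Real.exp (q*τ) - 1) * u| ≤ Real.exp (q*τ) - 1 := by
    intro u hu0 hu1
    have h1 : Real.exp (q*τ*u) ≤ Real.exp (q*τ) := by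
      apply Real.exp_le_exp.2
      nlinarith [mul_nonneg (mul_nonneg hq.le hτ.le) (by linarith : (0:ℝ) ≤ 1 - u)]
    have h2 : (1:ℝ) ≤ Real.exp (q*τ*u) := by
      rw [← Real.exp_zero]; apply Real.exp_le_exp.2
      exact mul_nonneg (mul_nonneg hq.le hτ.le) hu0
    have h3 : 0 ≤ (Real.exp (q*τ) - 1) * u := by nlinarith
    have h4 : (Real.exp (q*τ) - 1) * u ≤ Real.exp (q*τ) - 1 := by nlinarith
    rw [abs_le]; constructor <;> nlinarith
  have hbt := hbound _ (Int.fract_nonneg (t/τ)) (Int.fract_lt_one (t/τ))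
  have hbs := hbound _ (Int.fract_nonneg (s/τ)) (Int.fract_lt_one (s/τ))
  rw [abs_le] at hbt hbs
  have hts : 0 ≤ (t - s)/τ := div_nonneg (by linarith) hτ.le
  have hmain : κ*((Real.exp (q*τ) - 1) * ((t-s)/τ)) ≤ μ*(t-s) := by
    rcases eq_or_lt_of_le hκ with h|h
    · rw [← h]; simp
      exact mul_nonneg hμ (by linarith)
    · have := mul_le_mul_of_nonneg_right hcond hts
      calc κ*((Real.exp (q*τ) - 1) * ((t-s)/τ)) = κ*(Real.exp (q*τ) - 1) * ((t-s)/τ) := by ring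
        _ ≤ μ*τ*((t-s)/τ) := this
        _ = μ*(t-s) := by field_simp
  have hEκ : 2*(κ*(Real.exp (q*τ)-1)) ≤ 2*(μ*τ) := by linarith
  have h5 := mul_le_mul_of_nonneg_left hbt.2 hκ
  have h6 := mul_le_mul_of_nonneg_left hbs.1 hκ
  have hdiv : (t-s)/τ = t/τ - s/τ := sub_div t s τ
  rw [hdiv] at hmain
  simp only [Afun]
  nlinarith [h5, h6, hmain, hEκ]

lemma abstract_decay
    (q τ κ μ θ δ1 : ℝ) (x x' : ℝ → ℝ)
    (hq : 0 < q) (hτ : 0 < τ) (hκ : 0 < κ) (hμ : 0 < μ)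
    (hθ0 : 0 ≤ θ) (hθ1 : θ < 1) (hδ1 : 0 < δ1)
    (hcond : κ * (Real.exp (q*τ) - 1) ≤ μ * τ)
    (hx : ∀ t, 0 ≤ t → HasDerivAt x (x' t) t)
    (hx0 : ∀ t, 0 ≤ t → 0 ≤ x t)
    (hzone : ∀ t, 0 ≤ t → δ1 < x t → x' t < (θ * aafun q τ κ t - μ) * x t)
    (htouch : ∀ t, 0 ≤ t → 0 < x t → x' t < (aafun q τ κ t - μ) * x t) :
    ∃ t1, 0 ≤ t1 ∧ ∀ t, t1 ≤ t → x t ≤ 2*δ1*Real.exp (2*(μ*τ)) := by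
  have hcont : ContinuousOn x (Ici 0) :=
    fun t ht => (hx t ht).continuousAt.continuousWithinAt
  set S := {t : ℝ | 0 ≤ t ∧ x t ≤ δ1} with hS
  have hSclosed : IsClosed S := by
    have hrw : S = Ici 0 ∩ x ⁻¹' (Iic δ1) := by
      ext t; simp [hS, mem_Ici, mem_Iic, Set.mem_inter_iff]
    rw [hrw]
    exact hcont.preimage_isClosed_of_isClosed isClosed_Ici isClosed_Iic
  -- the B-derivative helper
  have hBgen : ∀ (c θ' t0 : ℝ) (t : ℝ), HasDerivWithinAt
      (fun s => c * Real.exp (θ' * Afun q τ κ s - μ * (s - t0)))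
      ((θ' * aafun q τ κ t - μ) * (c * Real.exp (θ' * Afun q τ κ t - μ * (t - t0)))) (Ici t) t := by
    intro c θ' t0 t
    have h1 : HasDerivWithinAt (fun s => θ' * Afun q τ κ s - μ * (s - t0))
        (θ' * aafun q τ κ t - μ) (Ici t) t := by
      have ha := (Afun_deriv (q := q) (κ := κ) hτ t).const_mul θ'
      have hb : HasDerivWithinAt (fun s : ℝ => μ * (s - t0)) μ (Ici t) t := by
        simpa using (((hasDerivAt_id t).sub_const t0).const_mul μ).hasDerivWithinAt
      exact ha.sub hb
    have h2 := (h1.exp).const_mul c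
    refine h2.congr_deriv ?_
    ring
  have hBcontgen : ∀ (c θ' t0 : ℝ), Continuous
      (fun s => c * Real.exp (θ' * Afun q τ κ s - μ * (s - t0))) := by
    intro c θ' t0
    exact continuous_const.mul (Real.continuous_exp.comp
      ((continuous_const.mul (Afun_cont (q := q) (κ := κ) hτ)).sub
        (continuous_const.mul (continuous_id.sub continuous_const))))
  have hSne : S.Nonempty := by
    by_contra hne
    have hgt : ∀ t, 0 ≤ t → δ1 < x t := by
      intro t ht
      by_contra h
      push_neg at h
      exact hne ⟨t, ht, h⟩
    have hx00 : 0 ≤ x 0 := hx0 0 le_rfl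
    set L := Real.log ((x 0 + 1)/δ1) with hL
    set T1 := (2*(μ*τ) + L + 1)/((1-θ)*μ) with hT1
    have hLpos : 0 < L := by
      apply Real.log_pos
      rw [lt_div_iff₀ hδ1]
      have := hgt 0 le_rfl
      linarith
    have h1θ : 0 < (1-θ)*μ := mul_pos (by linarith) hμ
    have hμτ : 0 < μ*τ := mul_pos hμ hτ
    have hT1pos : 0 < T1 := div_pos (by linarith) h1θ
    set B := fun s => (x 0 + 1) * Real.exp (θ * Afun q τ κ s - μ * (s - 0)) with hBdef
    have hcomp : x T1 ≤ B T1 := by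
      have key := image_le_of_deriv_right_lt_deriv_boundary' (f := x) (f' := x')
        (a := 0) (b := T1) (B := B)
        (B' := fun s => (θ * aafun q τ κ s - μ) * B s)
        (hcont.mono (Icc_subset_Ici_self))
        (fun s hs => (hx s hs.1).hasDerivWithinAt)
        (by
          have hB0 : B 0 = x 0 + 1 := by simp [hBdef, Afun_zero]
          rw [hB0]; linarith)
        ((hBcontgen (x 0 + 1) θ 0).continuousOn)
        (fun s _ => hBgen (x 0 + 1) θ 0 s)
        (fun s hs hxB => by
          have h := hzone s hs.1 (hgt s hs.1)
          rw [hxB] at h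
          simpa using h)
      exact key ⟨hT1pos.le, le_rfl⟩
    have hAT1 : Afun q τ κ T1 ≤ μ*T1 + 2*(μ*τ) := by
      have h := Afun_incr (q := q) (τ := τ) (κ := κ) hτ hq hκ.le hμ.le hcond hT1pos.le
      rw [Afun_zero] at h
      linarith
    have hexp : θ * Afun q τ κ T1 - μ * (T1 - 0) < -L := by
      have h1 : θ * Afun q τ κ T1 ≤ θ*(μ*T1 + 2*(μ*τ)) :=
        mul_le_mul_of_nonneg_left hAT1 hθ0
      have h2 : (1-θ)*μ*T1 = 2*(μ*τ) + L + 1 := by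
        rw [hT1]; field_simp [show (1-θ) ≠ 0 by linarith]
      nlinarith [mul_le_mul_of_nonneg_right hθ1.le hμτ.le]
    have hBT1 : B T1 < δ1 := by
      have h3 := Real.exp_lt_exp.2 hexp
      have h4 : Real.exp (-L) = δ1/(x 0 + 1) := by
        rw [hL, Real.exp_neg, Real.exp_log (by positivity), inv_div]
      rw [h4] at h3
      have h5 : (x 0 + 1) * (δ1 / (x 0 + 1)) = δ1 := by field_simp
      calc B T1 = (x 0 + 1) * Real.exp (θ * Afun q τ κ T1 - μ * (T1 - 0)) := rfl
        _ < (x 0 + 1) * (δ1 / (x 0 + 1)) := by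
            apply mul_lt_mul_of_pos_left h3 (by linarith)
        _ = δ1 := h5
    exact absurd (hcomp.trans_lt hBT1) (not_lt.2 (hgt T1 hT1pos.le).le)
  have hbdd : BddBelow S := ⟨0, fun t ht => ht.1⟩
  set t1 := sInf S with ht1def
  have ht1S : t1 ∈ S := hSclosed.csInf_mem hSne hbdd
  have ht10 : 0 ≤ t1 := ht1S.1
  have hxt1 : x t1 ≤ δ1 := ht1S.2
  refine ⟨t1, ht10, ?_⟩
  intro t htt1
  set B2 := fun s => (2*δ1*Real.exp (-(Afun q τ κ t1))) * Real.exp ((1:ℝ) * Afun q τ κ s - μ * (s - t1)) with hB2def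
  have hcomp2 : x t ≤ B2 t := by
    have key := image_le_of_deriv_right_lt_deriv_boundary' (f := x) (f' := x')
      (a := t1) (b := t) (B := B2)
      (B' := fun s => ((1:ℝ) * aafun q τ κ s - μ) * B2 s)
      (hcont.mono (fun s hs => le_trans ht10 hs.1))
      (fun s hs => (hx s (le_trans ht10 hs.1)).hasDerivWithinAt)
      (by
        have hB2t1 : B2 t1 = 2*δ1 := by
          simp only [hB2def]
          rw [mul_assoc, ← Real.exp_add]
          have harg : -(Afun q τ κ t1) + ((1:ℝ)*Afun q τ κ t1 - μ*(t1 - t1)) = 0 := by ring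
          rw [harg, Real.exp_zero, mul_one]
        rw [hB2t1]; linarith)
      ((hBcontgen (2*δ1*Real.exp (-(Afun q τ κ t1))) 1 t1).continuousOn)
      (fun s _ => hBgen (2*δ1*Real.exp (-(Afun q τ κ t1))) 1 t1 s)
      (fun s hs hxB => by
        have hB2pos : 0 < B2 s := by
          simp only [hB2def]
          positivity
        have hxpos : 0 < x s := by rw [hxB]; exact hB2pos
        have := htouch s (le_trans ht10 hs.1) hxpos
        rw [hxB] at this
        simpa using this)
    exact key ⟨htt1, le_rfl⟩
  have hAincr : Afun q τ κ t - Afun q τ κ t1 ≤ μ*(t - t1) + 2*(μ*τ) :=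
    Afun_incr (q := q) (τ := τ) (κ := κ) hτ hq hκ.le hμ.le hcond htt1
  calc x t ≤ B2 t := hcomp2
    _ = 2*δ1*Real.exp (Afun q τ κ t - Afun q τ κ t1 - μ*(t - t1)) := by
        simp only [hB2def]
        rw [mul_assoc, ← Real.exp_add]
        congr 1
        ring
    _ ≤ 2*δ1*Real.exp (2*(μ*τ)) := by
        apply mul_le_mul_of_nonneg_left _ (by positivity)
        apply Real.exp_le_exp.2
        linarith

lemma xexp_le' {β y : ℝ} (hβ : 0 < β) (hy : 0 ≤ y) :
    y * Real.exp (-(β * y)) * (Real.exp 1 * β) ≤ 1 := by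
  have h := xexp_le hβ hy
  have hK : 0 < Real.exp 1 * β := by positivity
  calc y * Real.exp (-(β * y)) * (Real.exp 1 * β) ≤ 1/(Real.exp 1*β) * (Real.exp 1 * β) :=
        mul_le_mul_of_nonneg_right h hK.le
    _ = 1 := by field_simp

lemma exp_split {β m f : ℝ} :
    Real.exp (-(β*(m+f))) = Real.exp (-(β*f)) * Real.exp (-(β*m)) := by
  rw [← Real.exp_add]; congr 1; ring

lemma exp_le_one' {a : ℝ} (ha : 0 ≤ a) : Real.exp (-a) ≤ 1 := by
  rw [Real.exp_le_one_iff]; linarith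

lemma exp_lt_one' {a : ℝ} (ha : 0 < a) : Real.exp (-a) < 1 := by
  rw [Real.exp_lt_one_iff]; linarith

lemma touch_bound_1 {β γ s m f : ℝ} (hβ : 0 < β) (hγ : 0 < γ) (hs : 0 < s)
    (hm : 0 < m) (hf : 0 ≤ f) :
    f*m/(m+γ*s)*Real.exp (-(β*(m+f))) < m/(Real.exp 1*β*γ*s) := by
  have hD : 0 < m + γ*s := by positivity
  have hK : 0 < Real.exp 1*β*γ*s := by positivity
  rw [div_mul_eq_mul_div, div_lt_div_iff₀ hD hK]
  rw [exp_split]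
  have h1 := xexp_le' hβ hf
  have h2 : Real.exp (-(β*m)) < 1 := exp_lt_one' (by positivity)
  have h3 : (0:ℝ) < Real.exp (-(β*m)) := Real.exp_pos _
  have h4 : (0:ℝ) ≤ f * Real.exp (-(β*f)) := by positivity
  have step1 : f*Real.exp (-(β*f))*(Real.exp 1*β)*(Real.exp (-(β*m))*(m*(γ*s)))
      ≤ 1*(Real.exp (-(β*m))*(m*(γ*s))) :=
    mul_le_mul_of_nonneg_right h1 (by positivity)
  have step2 : Real.exp (-(β*m))*(m*(γ*s)) < 1*(m*(γ*s)) := by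
    apply mul_lt_mul_of_pos_right h2 (by positivity)
  nlinarith [mul_pos hm hm, step1, step2, mul_pos (mul_pos hγ hs) hm]

lemma zone_bound_1 {β γ s Smax m f δ1 : ℝ} (hβ : 0 < β) (hγ : 0 < γ) (hs : 0 < s)
    (hsm : s ≤ Smax) (hδ1 : 0 < δ1) (hm : δ1 < m) (hf : 0 ≤ f) :
    f*m/(m+γ*s)*Real.exp (-(β*(m+f))) <
      (γ*Smax/(δ1+γ*Smax)) * (m/(Real.exp 1*β*γ*s)) := by
  have hSmax : 0 < Smax := lt_of_lt_of_le hs hsm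
  have hD : 0 < m + γ*s := by nlinarith
  have hK : 0 < Real.exp 1*β*γ*s := by positivity
  have hDen : 0 < δ1 + γ*Smax := by positivity
  have hm0 : 0 < m := hδ1.trans hm
  have hrw : (γ*Smax/(δ1+γ*Smax)) * (m/(Real.exp 1*β*γ*s))
      = γ*Smax*m/((δ1+γ*Smax)*(Real.exp 1*β*γ*s)) := by
    field_simp
  rw [hrw, div_mul_eq_mul_div, div_lt_div_iff₀ hD (by positivity)]
  rw [exp_split]
  have h1 := xexp_le' hβ hf
  have h2 : Real.exp (-(β*m)) ≤ 1 := exp_le_one' (by positivity)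
  have h3 : (0:ℝ) < Real.exp (-(β*m)) := Real.exp_pos _
  have step1 : f*Real.exp (-(β*f))*(Real.exp 1*β)*(Real.exp (-(β*m))*(m*(γ*s))*(δ1+γ*Smax))
      ≤ 1*(Real.exp (-(β*m))*(m*(γ*s))*(δ1+γ*Smax)) :=
    mul_le_mul_of_nonneg_right h1 (by positivity)
  have step2 : Real.exp (-(β*m))*(m*(γ*s))*(δ1+γ*Smax) ≤ 1*(m*(γ*s))*(δ1+γ*Smax) := by
    apply mul_le_mul_of_nonneg_right _ hDen.le
    exact mul_le_mul_of_nonneg_right h2 (by positivity)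
  have key : s*δ1 < Smax*m := by nlinarith
  have key2 : m*(γ*s)*(δ1+γ*Smax) < γ*Smax*m*(m+γ*s) := by nlinarith [mul_pos hγ hm0]
  nlinarith [step1, step2, key2]

lemma touch_bound_2 {β γ s m f : ℝ} (hβ : 0 < β) (hγ : 0 < γ) (hs : 0 < s)
    (hf : 0 < f) (hm : 0 ≤ m) :
    f*m/(m+γ*s)*Real.exp (-(β*(m+f))) < f/(Real.exp 1*β*γ*s) := by
  have hD : 0 < m + γ*s := by positivity
  have hK : 0 < Real.exp 1*β*γ*s := by positivity
  rw [div_mul_eq_mul_div, div_lt_div_iff₀ hD hK]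
  rw [exp_split]
  have h1 := xexp_le' hβ hm
  have h2 : Real.exp (-(β*f)) < 1 := exp_lt_one' (by positivity)
  have h3 : (0:ℝ) < Real.exp (-(β*f)) := Real.exp_pos _
  have step1 : m*Real.exp (-(β*m))*(Real.exp 1*β)*(Real.exp (-(β*f))*(f*(γ*s)))
      ≤ 1*(Real.exp (-(β*f))*(f*(γ*s))) :=
    mul_le_mul_of_nonneg_right h1 (by positivity)
  have step2 : Real.exp (-(β*f))*(f*(γ*s)) < 1*(f*(γ*s)) := by
    apply mul_lt_mul_of_pos_right h2 (by positivity)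
  nlinarith [mul_pos hf hf, step1, step2, mul_pos (mul_pos hγ hs) hf, mul_nonneg hm hf.le]

lemma zone_bound_2 {β γ s Smax m f : ℝ} (hβ : 0 < β) (hγ : 0 < γ) (hs : 0 < s)
    (hsm : s ≤ Smax) (hf : 0 < f) (hm : 0 ≤ m) :
    f*m/(m+γ*s)*Real.exp (-(β*(m+f))) <
      (max (Real.exp (-(1/2:ℝ))*Real.exp 1/2) (γ*Smax/(1/(2*β)+γ*Smax)))
        * (f/(Real.exp 1*β*γ*s)) := by
  have hSmax : 0 < Smax := lt_of_lt_of_le hs hsm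
  have hD : 0 < m + γ*s := by positivity
  have hK : 0 < Real.exp 1*β*γ*s := by positivity
  set θ := max (Real.exp (-(1/2:ℝ))*Real.exp 1/2) (γ*Smax/(1/(2*β)+γ*Smax)) with hθdef
  -- me^{-βm}/(m+γs) ≤ θ/(e1 β γ s)
  have hbracket : m*Real.exp (-(β*m))/(m+γ*s) ≤ θ * (1/(Real.exp 1*β*γ*s)) := by
    rcases le_or_gt m (1/(2*β)) with hcase|hcase
    · -- small m : use uexp_le
      have hu := uexp_le (u := β*m) (by positivity) (by
        have h' : β*m ≤ β*(1/(2*β)) := mul_le_mul_of_nonneg_left hcase hβ.le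
        have heq' : β*(1/(2*β)) = 1/2 := by field_simp
        linarith)
      have hθ1 : Real.exp (-(1/2:ℝ))*Real.exp 1/2 ≤ θ := le_max_left _ _
      have hmexp : m*Real.exp (-(β*m)) ≤ Real.exp (-(1/2:ℝ))/(2*β) := by
        have : β*(m*Real.exp (-(β*m))) ≤ β*(Real.exp (-(1/2:ℝ))/(2*β)) := by
          have heq : β*(Real.exp (-(1/2:ℝ))/(2*β)) = Real.exp (-(1/2:ℝ))/2 := by
            field_simp
          rw [heq]
          calc β*(m*Real.exp (-(β*m))) = (β*m)*Real.exp (-(β*m)) := by ring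
            _ ≤ Real.exp (-(1/2:ℝ))/2 := by
                have harg : -(β*m) = -(β*m) := rfl
                simpa using hu
        exact le_of_mul_le_mul_left this hβ
      calc m*Real.exp (-(β*m))/(m+γ*s) ≤ m*Real.exp (-(β*m))/(γ*s) := by
            apply div_le_div_of_nonneg_left (by positivity) (by positivity) (by nlinarith)
        _ ≤ (Real.exp (-(1/2:ℝ))/(2*β))/(γ*s) := by gcongr
        _ = (Real.exp (-(1/2:ℝ))*Real.exp 1/2) * (1/(Real.exp 1*β*γ*s)) := by
            rw [div_div, mul_div_assoc]
            congr 1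
            · field_simp
        _ ≤ θ * (1/(Real.exp 1*β*γ*s)) := by
            apply mul_le_mul_of_nonneg_right hθ1 (by positivity)
    · -- large m
      have hθ2 : γ*Smax/(1/(2*β)+γ*Smax) ≤ θ := le_max_right _ _
      have hDen : 0 < 1/(2*β)+γ*Smax := by positivity
      have h1 := xexp_le' hβ hm
      have hstep : m*Real.exp (-(β*m))/(m+γ*s) ≤ (γ*Smax/(1/(2*β)+γ*Smax)) * (1/(Real.exp 1*β*γ*s)) := by
        rw [div_le_iff₀ hD]
        have hrw : (γ*Smax/(1/(2*β)+γ*Smax)) * (1/(Real.exp 1*β*γ*s)) * (m+γ*s)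
            = γ*Smax*(m+γ*s)/((1/(2*β)+γ*Smax)*(Real.exp 1*β*γ*s)) := by
          field_simp
        rw [hrw, le_div_iff₀ (by positivity)]
        have hkey : s*(1/(2*β)) ≤ Smax*m :=
          mul_le_mul hsm hcase.le (by positivity) hSmax.le
        have p1 : m*Real.exp (-(β*m))*(Real.exp 1*β)*((1/(2*β)+γ*Smax)*(γ*s))
            ≤ 1*((1/(2*β)+γ*Smax)*(γ*s)) := mul_le_mul_of_nonneg_right h1 (by positivity)
        have p2 : γ*(s*(1/(2*β))) ≤ γ*(Smax*m) := mul_le_mul_of_nonneg_left hkey hγ.le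
        nlinarith [p1, p2]
      exact hstep.trans (mul_le_mul_of_nonneg_right hθ2 (by positivity))
  -- combine with f e^{-βf} < f
  rcases eq_or_lt_of_le hm with hm0|hm0
  · -- m = 0
    have : f*m/(m+γ*s)*Real.exp (-(β*(m+f))) = 0 := by rw [← hm0]; simp
    rw [this]
    have hθpos : 0 < θ := lt_of_lt_of_le (by positivity) (le_max_left _ _)
    positivity
  · have hsplit : f*m/(m+γ*s)*Real.exp (-(β*(m+f)))
        = (f*Real.exp (-(β*f))) * (m*Real.exp (-(β*m))/(m+γ*s)) := by
      rw [exp_split]; field_simp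
    rw [hsplit]
    have hbr_pos : 0 < m*Real.exp (-(β*m))/(m+γ*s) := by positivity
    have hfe : f*Real.exp (-(β*f)) < f := by
      nlinarith [exp_lt_one' (show (0:ℝ) < β*f by positivity), Real.exp_pos (-(β*f))]
    calc (f*Real.exp (-(β*f))) * (m*Real.exp (-(β*m))/(m+γ*s))
        < f * (m*Real.exp (-(β*m))/(m+γ*s)) := by
          exact mul_lt_mul_of_pos_right hfe hbr_pos
      _ ≤ f * (θ * (1/(Real.exp 1*β*γ*s))) := mul_le_mul_of_nonneg_left hbracket hf.le
      _ = θ * (f/(Real.exp 1*β*γ*s)) := by ring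

lemma touch_bound_3 {β γ s m f : ℝ} (hβ : 0 < β) (hγ : 0 < γ) (hs : 0 < s)
    (hm : 0 ≤ m) (hf : 0 ≤ f) (hn : 0 < m + f) :
    f*m/(m+γ*s)*Real.exp (-(β*(m+f))) < (m+f)/(4*(Real.exp 1*β*γ*s)) := by
  have hD : 0 < m + γ*s := by positivity
  have hK : (0:ℝ) < 4*(Real.exp 1*β*γ*s) := by positivity
  rcases eq_or_lt_of_le hm with hm0|hm0
  · have hz : f*m/(m+γ*s)*Real.exp (-(β*(m+f))) = 0 := by rw [← hm0]; simp
    rw [hz]; positivity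
  rcases eq_or_lt_of_le hf with hf0|hf0
  · have hz : f*m/(m+γ*s)*Real.exp (-(β*(m+f))) = 0 := by rw [← hf0]; simp
    rw [hz]; positivity
  rw [div_mul_eq_mul_div, div_lt_div_iff₀ hD hK]
  have h1 := xexp_le' hβ hn.le
  have a1 : f*m ≤ (m+f)^2/4 := by nlinarith [sq_nonneg (m-f)]
  have p0 : f*m*(Real.exp (-(β*(m+f)))*(4*(Real.exp 1*β*γ*s)))
      ≤ ((m+f)^2/4)*(Real.exp (-(β*(m+f)))*(4*(Real.exp 1*β*γ*s))) :=
    mul_le_mul_of_nonneg_right a1 (by positivity)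
  have p1 : (m+f)*Real.exp (-(β*(m+f)))*(Real.exp 1*β)*((γ*s)*(m+f))
      ≤ 1*((γ*s)*(m+f)) := mul_le_mul_of_nonneg_right h1 (by positivity)
  nlinarith [p0, p1, mul_pos hn hm0]

lemma zone_bound_3 {β γ s Smax m f δ1 : ℝ} (hβ : 0 < β) (hγ : 0 < γ) (hs : 0 < s)
    (hsm : s ≤ Smax) (hδ1 : 0 < δ1) (hn : δ1 < m + f) (hm : 0 ≤ m) (hf : 0 ≤ f) :
    f*m/(m+γ*s)*Real.exp (-(β*(m+f))) <
      (max (3/4) (γ*Smax/(δ1/8+γ*Smax))) * ((m+f)/(4*(Real.exp 1*β*γ*s))) := by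
  have hSmax : 0 < Smax := lt_of_lt_of_le hs hsm
  have hD : 0 < m + γ*s := by positivity
  have hK : (0:ℝ) < 4*(Real.exp 1*β*γ*s) := by positivity
  set θ := max ((3:ℝ)/4) (γ*Smax/(δ1/8+γ*Smax)) with hθdef
  have hθ34 : (3:ℝ)/4 ≤ θ := le_max_left _ _
  have hθpos : 0 < θ := lt_of_lt_of_le (by norm_num) hθ34
  have hnpos : 0 < m + f := hδ1.trans hn
  rcases eq_or_lt_of_le hm with hm0|hm0
  · have hz : f*m/(m+γ*s)*Real.exp (-(β*(m+f))) = 0 := by rw [← hm0]; simp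
    rw [hz]; positivity
  rcases eq_or_lt_of_le hf with hf0|hf0
  · have hz : f*m/(m+γ*s)*Real.exp (-(β*(m+f))) = 0 := by rw [← hf0]; simp
    rw [hz]; positivity
  have h1 := xexp_le' hβ hnpos.le
  rcases le_or_gt m ((m+f)/8) with hcase|hcase
  · -- m ≤ n/8 : coefficient 1/2 < 3/4
    have hP : f*m/(m+γ*s)*Real.exp (-(β*(m+f))) ≤ (1/2)*((m+f)/(4*(Real.exp 1*β*γ*s))) := by
      have hrw : (1/2)*((m+f)/(4*(Real.exp 1*β*γ*s))) = (m+f)/(8*(Real.exp 1*β*γ*s)) := by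
        ring
      rw [hrw, div_mul_eq_mul_div, div_le_div_iff₀ hD (by positivity)]
      have a1 : f*m ≤ (m+f)^2/8 := by nlinarith [mul_le_mul_of_nonneg_left hcase hf]
      have p0 : f*m*(Real.exp (-(β*(m+f)))*(8*(Real.exp 1*β*γ*s)))
          ≤ ((m+f)^2/8)*(Real.exp (-(β*(m+f)))*(8*(Real.exp 1*β*γ*s))) :=
        mul_le_mul_of_nonneg_right a1 (by positivity)
      have p1 : (m+f)*Real.exp (-(β*(m+f)))*(Real.exp 1*β)*((γ*s)*(m+f))
          ≤ 1*((γ*s)*(m+f)) := mul_le_mul_of_nonneg_right h1 (by positivity)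
      nlinarith [p0, p1, mul_nonneg (mul_nonneg hm hf) hnpos.le,
        mul_nonneg hnpos.le hm]
    have hX : 0 < (m+f)/(4*(Real.exp 1*β*γ*s)) := by positivity
    calc f*m/(m+γ*s)*Real.exp (-(β*(m+f))) ≤ (1/2)*((m+f)/(4*(Real.exp 1*β*γ*s))) := hP
      _ < θ*((m+f)/(4*(Real.exp 1*β*γ*s))) := by
          apply mul_lt_mul_of_pos_right _ hX
          exact lt_of_lt_of_le (by norm_num) hθ34
  · -- m > n/8 : strict gain in the denominator
    have hθ2 : γ*Smax/(δ1/8+γ*Smax) ≤ θ := le_max_right _ _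
    have hDen : (0:ℝ) < δ1/8 + γ*Smax := by positivity
    have hP : f*m/(m+γ*s)*Real.exp (-(β*(m+f))) <
        (γ*Smax/(δ1/8+γ*Smax))*((m+f)/(4*(Real.exp 1*β*γ*s))) := by
      have hrw : (γ*Smax/(δ1/8+γ*Smax))*((m+f)/(4*(Real.exp 1*β*γ*s)))
          = γ*Smax*(m+f)/((δ1/8+γ*Smax)*(4*(Real.exp 1*β*γ*s))) :=
        div_mul_div_comm _ _ _ _
      rw [hrw, div_mul_eq_mul_div, div_lt_div_iff₀ hD (by positivity)]
      have a1 : f*m ≤ (m+f)^2/4 := by nlinarith [sq_nonneg (m-f)]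
      have p0 : f*m*(Real.exp (-(β*(m+f)))*((δ1/8+γ*Smax)*(4*(Real.exp 1*β*γ*s))))
          ≤ ((m+f)^2/4)*(Real.exp (-(β*(m+f)))*((δ1/8+γ*Smax)*(4*(Real.exp 1*β*γ*s)))) :=
        mul_le_mul_of_nonneg_right a1 (by positivity)
      have p1 : (m+f)*Real.exp (-(β*(m+f)))*(Real.exp 1*β)*((m+f)*((δ1/8+γ*Smax)*(γ*s)))
          ≤ 1*((m+f)*((δ1/8+γ*Smax)*(γ*s))) :=
        mul_le_mul_of_nonneg_right h1 (by positivity)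
      have k0 : δ1/8 < m := by linarith
      have k : s*(δ1/8) < Smax*m := by
        calc s*(δ1/8) ≤ Smax*(δ1/8) := mul_le_mul_of_nonneg_right hsm (by positivity)
          _ < Smax*m := mul_lt_mul_of_pos_left k0 hSmax
      have p2 : ((m+f)*γ)*(s*(δ1/8)) < ((m+f)*γ)*(Smax*m) :=
        mul_lt_mul_of_pos_left k (by positivity)
      nlinarith [p0, p1, p2]
    exact hP.trans_le (mul_le_mul_of_nonneg_right hθ2 (by positivity))

lemma small_bound_prod {β γ s s0 m f : ℝ} (hβ : 0 < β) (hγ : 0 < γ) (hs0 : 0 < s0)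
    (hss : s0 ≤ s) (hm : 0 ≤ m) (hf : 0 ≤ f) :
    f*m/(m+γ*s)*Real.exp (-(β*(m+f))) ≤ f*m/(γ*s0) := by
  have hs : 0 < s := lt_of_lt_of_le hs0 hss
  have hD : 0 < m + γ*s := by positivity
  calc f*m/(m+γ*s)*Real.exp (-(β*(m+f))) ≤ f*m/(m+γ*s)*1 := by
        apply mul_le_mul_of_nonneg_left (exp_le_one' (by positivity)) (by positivity)
    _ = f*m/(m+γ*s) := by ring
    _ ≤ f*m/(γ*s0) := by
        apply div_le_div_of_nonneg_left (by positivity) (by positivity)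
        nlinarith

lemma global_bound {β γ s s0 m f : ℝ} (hβ : 0 < β) (hγ : 0 < γ) (hs0 : 0 < s0)
    (hss : s0 ≤ s) (hm : 0 ≤ m) (hf : 0 ≤ f) :
    f*m/(m+γ*s)*Real.exp (-(β*(m+f))) ≤ (1/(Real.exp 1*β))^2/(γ*s0) := by
  have hs : 0 < s := lt_of_lt_of_le hs0 hss
  have hD : 0 < m + γ*s := by positivity
  have hnum : f*m*Real.exp (-(β*(m+f))) ≤ (1/(Real.exp 1*β))^2 := by
    have h := xexp_le hβ (show (0:ℝ) ≤ (m+f)/2 by positivity)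
    have hsq := mul_self_le_mul_self (by positivity) h
    have hE2 : Real.exp (-(β*((m+f)/2))) * Real.exp (-(β*((m+f)/2)))
        = Real.exp (-(β*(m+f))) := by rw [← Real.exp_add]; congr 1; ring
    have hprod : ((m+f)/2*Real.exp (-(β*((m+f)/2))))*((m+f)/2*Real.exp (-(β*((m+f)/2))))
        = (m+f)^2/4 * Real.exp (-(β*(m+f))) := by
      calc ((m+f)/2*Real.exp (-(β*((m+f)/2))))*((m+f)/2*Real.exp (-(β*((m+f)/2))))
          = (m+f)^2/4 * (Real.exp (-(β*((m+f)/2))) * Real.exp (-(β*((m+f)/2)))) := by ring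
        _ = (m+f)^2/4 * Real.exp (-(β*(m+f))) := by rw [hE2]
    rw [hprod] at hsq
    have a1 : f*m ≤ (m+f)^2/4 := by nlinarith [sq_nonneg (m-f)]
    have hsq' : (m+f)^2/4 * Real.exp (-(β*(m+f))) ≤ (1/(Real.exp 1*β))^2 := by
      calc (m+f)^2/4 * Real.exp (-(β*(m+f))) ≤ 1/(Real.exp 1*β) * (1/(Real.exp 1*β)) := hsq
        _ = (1/(Real.exp 1*β))^2 := by ring
    calc f*m*Real.exp (-(β*(m+f))) ≤ (m+f)^2/4 * Real.exp (-(β*(m+f))) :=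
          mul_le_mul_of_nonneg_right a1 (Real.exp_pos _).le
      _ ≤ (1/(Real.exp 1*β))^2 := hsq'
  calc f*m/(m+γ*s)*Real.exp (-(β*(m+f))) = (f*m*Real.exp (-(β*(m+f))))/(m+γ*s) := by
        rw [div_mul_eq_mul_div]
    _ ≤ (f*m*Real.exp (-(β*(m+f))))/(γ*s0) := by
        apply div_le_div_of_nonneg_left (by positivity) (by positivity)
        nlinarith
    _ ≤ (1/(Real.exp 1*β))^2/(γ*s0) := by gcongr


/-- The periodic sterile male population resulting from periodic impulsive releases. -/
noncomputable def MSper (μS τ Λ t : ℝ) : ℝ :=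
  τ * Λ * Real.exp (-(μS * (t - (⌊t / τ⌋ : ℝ) * τ))) / (1 - Real.exp (-(μS * τ)))

set_option maxHeartbeats 2000000 in
theorem stmt_9 (r ρ β μM μF μS γ τ Λ : ℝ)
    (hr0 : 0 < r) (hr1 : r < 1) (hρ : 0 < ρ) (hβ : 0 < β)
    (hμM : 0 < μM) (hμF : 0 < μF) (hμS : 0 < μS) (hγ : 0 < γ)
    (hμ : μF ≤ μM) (hτ : 0 < τ)
    (hΛ : Λ ≥ ((Real.cosh (μS * τ) - 1) / (μS * τ ^ 2)) * (1 / (Real.exp 1 * β * γ)) *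
      min (2 * (r * ρ / μM))
        (min (2 * ((1 - r) * ρ / μF))
          (max r (1 - r) * max ((r * ρ / μM) / r) (((1 - r) * ρ / μF) / (1 - r)))))
    (M F : ℝ → ℝ)
    (hMnn : ∀ t, 0 ≤ t → 0 ≤ M t) (hFnn : ∀ t, 0 ≤ t → 0 ≤ F t)
    (hdM : ∀ t, 0 ≤ t →
      HasDerivAt M (r * ρ * (F t * M t / (M t + γ * MSper μS τ Λ t)) *
        Real.exp (-(β * (M t + F t))) - μM * M t) t)
    (hdF : ∀ t, 0 ≤ t →
      HasDerivAt F ((1 - r) * ρ * (F t * M t / (M t + γ * MSper μS τ Λ t)) *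
        Real.exp (-(β * (M t + F t))) - μF * F t) t) :
    ∃ C > 0, ∃ ε > 0, ∀ t, 0 ≤ t → M t + F t ≤ C * Real.exp (-(ε * t)) := by
  have he1 : (0:ℝ) < Real.exp 1 := Real.exp_pos 1
  have hqτ : 0 < μS*τ := mul_pos hμS hτ
  have hEgt : 1 < Real.exp (μS*τ) := by
    rw [← Real.exp_zero]; exact Real.exp_lt_exp.2 hqτ
  have h1me : 0 < 1 - Real.exp (-(μS*τ)) := by
    have := exp_lt_one' hqτ; linarith
  have hcosh : 0 < Real.cosh (μS*τ) - 1 := by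
    have := Real.one_lt_cosh.2 (ne_of_gt hqτ); linarith
  have hr1' : 0 < 1 - r := by linarith
  have hΛpos : 0 < Λ := by
    have hXpos : 0 < ((Real.cosh (μS * τ) - 1) / (μS * τ ^ 2)) * (1 / (Real.exp 1 * β * γ)) :=
      mul_pos (div_pos hcosh (by positivity)) (by positivity)
    have hmin_pos : 0 < min (2 * (r * ρ / μM))
        (min (2 * ((1 - r) * ρ / μF))
          (max r (1 - r) * max ((r * ρ / μM) / r) (((1 - r) * ρ / μF) / (1 - r)))) := by
      apply lt_min (by positivity)
      apply lt_min (by positivity)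
      apply mul_pos (lt_of_lt_of_le hr0 (le_max_left _ _))
      exact lt_of_lt_of_le (by positivity) (le_max_left _ _)
    exact lt_of_lt_of_le (mul_pos hXpos hmin_pos) hΛ
  obtain ⟨S0, hS0def⟩ : ∃ x : ℝ, x = τ*Λ*Real.exp (-(μS*τ))/(1 - Real.exp (-(μS*τ))) := ⟨_, rfl⟩
  obtain ⟨Smax, hSmaxdef⟩ : ∃ x : ℝ, x = τ*Λ/(1 - Real.exp (-(μS*τ))) := ⟨_, rfl⟩
  have hS0pos : 0 < S0 := by rw [hS0def]; positivity
  have hfrac : ∀ t : ℝ, t - (⌊t/τ⌋:ℝ)*τ = τ * Int.fract (t/τ) := by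
    intro t
    have h : Int.fract (t/τ) = t/τ - (⌊t/τ⌋:ℝ) := rfl
    rw [h]
    field_simp
  have hMS_eq : ∀ t, MSper μS τ Λ t
      = τ*Λ*Real.exp (-(μS*(τ*Int.fract (t/τ))))/(1 - Real.exp (-(μS*τ))) := by
    intro t
    unfold MSper
    rw [hfrac t]
  have hfr1 : ∀ t : ℝ, τ*Int.fract (t/τ) ≤ τ := by
    intro t
    nlinarith [Int.fract_lt_one (t/τ), Int.fract_nonneg (t/τ)]
  have hfr0 : ∀ t : ℝ, 0 ≤ τ*Int.fract (t/τ) := by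
    intro t
    exact mul_nonneg hτ.le (Int.fract_nonneg _)
  have hMS_lb : ∀ t, S0 ≤ MSper μS τ Λ t := by
    intro t
    rw [hMS_eq t, hS0def]
    gcongr
    <;> first
      | exact h1me
      | (apply Real.exp_le_exp.2; nlinarith [hfr1 t, hfr0 t])
      | nlinarith [hfr1 t, hfr0 t]
  have hMS_ub : ∀ t, MSper μS τ Λ t ≤ Smax := by
    intro t
    rw [hMS_eq t, hSmaxdef]
    have key : τ*Λ*Real.exp (-(μS*(τ*Int.fract (t/τ)))) ≤ τ*Λ := by
      calc τ*Λ*Real.exp (-(μS*(τ*Int.fract (t/τ)))) ≤ τ*Λ*1 := by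
            apply mul_le_mul_of_nonneg_left (exp_le_one' _) (by positivity)
            exact mul_nonneg hμS.le (hfr0 t)
        _ = τ*Λ := by ring
    gcongr
  have hMSpos : ∀ t, 0 < MSper μS τ Λ t := fun t => lt_of_lt_of_le hS0pos (hMS_lb t)
  obtain ⟨Φ, hΦdef⟩ : ∃ Φ : ℝ → ℝ, Φ = fun t => F t * M t / (M t + γ * MSper μS τ Λ t) *
      Real.exp (-(β * (M t + F t))) := ⟨_, rfl⟩
  have hM' : ∀ t, 0 ≤ t → HasDerivAt M (r*ρ*Φ t - μM*M t) t := by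
    intro t ht
    convert hdM t ht using 1
    simp only [hΦdef]
    ring
  have hF' : ∀ t, 0 ≤ t → HasDerivAt F ((1-r)*ρ*Φ t - μF*F t) t := by
    intro t ht
    convert hdF t ht using 1
    simp only [hΦdef]
    ring
  have hN' : ∀ t, 0 ≤ t → HasDerivAt (fun u => M u + F u)
      (ρ*Φ t - (μM*M t + μF*F t)) t := by
    intro t ht
    refine ((hM' t ht).add (hF' t ht)).congr_deriv ?_
    ring
  have hident : ∀ c : ℝ, ∀ t,
      aafun μS τ (c*(1 - Real.exp (-(μS*τ)))/(Real.exp 1*β*γ*τ*Λ*μS)) t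
        = c/(Real.exp 1*β*γ*MSper μS τ Λ t) := by
    intro c t
    rw [hMS_eq t]
    unfold aafun
    have harg : μS*(τ*Int.fract (t/τ)) = μS*τ*Int.fract (t/τ) := by ring
    rw [harg, Real.exp_neg (μS*τ*Int.fract (t/τ))]
    have hep := Real.exp_pos (μS*τ*Int.fract (t/τ))
    field_simp
  obtain ⟨δ2, hδ2def⟩ : ∃ x : ℝ, x = γ*S0*μF/(4*ρ) := ⟨_, rfl⟩
  have hδ2pos : 0 < δ2 := by rw [hδ2def]; positivity
  -- the common tail : from eventual smallness of the birth rate, conclude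
  suffices KEY : ∃ t1, 0 ≤ t1 ∧ ∀ t, t1 ≤ t → ρ * Φ t ≤ (μF/4)*(M t + F t) by
    obtain ⟨t1, ht10, hKEY⟩ := KEY
    obtain ⟨B0, hB0def⟩ : ∃ x : ℝ, x = ρ*((1/(Real.exp 1*β))^2/(γ*S0)) := ⟨_, rfl⟩
    have hB0pos : 0 < B0 := by rw [hB0def]; positivity
    have hΦglob : ∀ t, 0 ≤ t → ρ*Φ t ≤ B0 := by
      intro t ht
      rw [hB0def]
      apply mul_le_mul_of_nonneg_left _ hρ.le
      simp only [hΦdef]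
      exact global_bound hβ hγ hS0pos (hMS_lb t) (hMnn t ht) (hFnn t ht)
    obtain ⟨B1, hB1def⟩ : ∃ x : ℝ, x = max (M 0 + F 0) (B0/μF) + 1 := ⟨_, rfl⟩
    have hB1ge : B0/μF ≤ B1 - 1 := by rw [hB1def]; simp
    have hB1ge' : M 0 + F 0 ≤ B1 - 1 := by rw [hB1def]; simp
    have hB1pos : 0 < B1 := by
      have := hMnn 0 le_rfl; have := hFnn 0 le_rfl
      nlinarith
    have hcontN : ContinuousOn (fun u => M u + F u) (Ici 0) :=
      fun s hs => ((hN' s hs).continuousAt).continuousWithinAt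
    have hNle : ∀ t, 0 ≤ t → M t + F t ≤ B1 := by
      intro t ht
      have hcomp := image_le_of_deriv_right_lt_deriv_boundary
        (f := fun u => M u + F u) (f' := fun u => ρ*Φ u - (μM*M u + μF*F u))
        (a := 0) (b := t) (B := fun _ => B1) (B' := fun _ => 0)
        (hcontN.mono Icc_subset_Ici_self)
        (fun s hs => (hN' s hs.1).hasDerivWithinAt)
        (show M 0 + F 0 ≤ B1 by linarith)
        (fun s => hasDerivAt_const s B1)
        (fun s hs hNs => by
          show ρ*Φ s - (μM*M s + μF*F s) < 0
          have hNs' : M s + F s = B1 := hNs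
          have hg := hΦglob s hs.1
          have hμ1 : μF*(M s + F s) ≤ μM*M s + μF*F s := by
            nlinarith [hMnn s hs.1]
          have hB1B0 : B0 + μF ≤ μF * B1 := by
            have h' : μF*(B0/μF) = B0 := by field_simp
            nlinarith [mul_le_mul_of_nonneg_left hB1ge hμF.le]
          rw [hNs'] at hμ1
          linarith)
      exact hcomp ⟨ht, le_rfl⟩
    have hphase3 : ∀ t, t1 ≤ t → M t + F t ≤ (B1+1)*Real.exp (-(μF/2)*(t - t1)) := by
      intro t ht
      have hcomp := image_le_of_deriv_right_lt_deriv_boundary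
        (f := fun u => M u + F u) (f' := fun u => ρ*Φ u - (μM*M u + μF*F u))
        (a := t1) (b := t)
        (B := fun s => (B1+1)*Real.exp (-(μF/2)*(s - t1)))
        (B' := fun s => (B1+1)*Real.exp (-(μF/2)*(s - t1))*(-(μF/2)))
        (hcontN.mono (fun s hs => le_trans ht10 hs.1))
        (fun s hs => (hN' s (le_trans ht10 hs.1)).hasDerivWithinAt)
        (show M t1 + F t1 ≤ (B1+1)*Real.exp (-(μF/2)*(t1 - t1)) by
          have h0 := hNle t1 ht10
          rw [sub_self, mul_zero, Real.exp_zero, mul_one]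
          linarith)
        (fun s => by
          have h1 : HasDerivAt (fun u : ℝ => -(μF/2)*(u - t1)) (-(μF/2)) s := by
            simpa using ((hasDerivAt_id s).sub_const t1).const_mul (-(μF/2))
          have h2 := (h1.exp).const_mul (B1+1)
          refine h2.congr_deriv ?_
          ring)
        (fun s hs hNs => by
          show ρ*Φ s - (μM*M s + μF*F s) < (B1+1)*Real.exp (-(μF/2)*(s - t1))*(-(μF/2))
          have hNs' : M s + F s = (B1+1)*Real.exp (-(μF/2)*(s - t1)) := hNs
          have hs0 : 0 ≤ s := le_trans ht10 hs.1
          have hBpos : 0 < (B1+1)*Real.exp (-(μF/2)*(s - t1)) := by positivity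
          have hNpos : 0 < M s + F s := by rw [hNs']; exact hBpos
          have hkey := hKEY s hs.1
          have hμ1 : μF*(M s + F s) ≤ μM*M s + μF*F s := by
            nlinarith [hMnn s hs0]
          have hstep : ρ*Φ s - (μM*M s + μF*F s) < -(μF/2)*(M s + F s) := by
            nlinarith [mul_pos hμF hNpos]
          rw [hNs'] at hstep
          calc ρ*Φ s - (μM*M s + μF*F s)
              < -(μF/2)*((B1+1)*Real.exp (-(μF/2)*(s - t1))) := hstep
            _ = (B1+1)*Real.exp (-(μF/2)*(s - t1))*(-(μF/2)) := by ring)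
      exact hcomp ⟨ht, le_rfl⟩
    refine ⟨(B1+1)*Real.exp ((μF/2)*t1), by positivity, μF/2, by positivity, ?_⟩
    intro t ht
    have hexpand : (B1+1)*Real.exp ((μF/2)*t1) * Real.exp (-(μF/2*t))
        = (B1+1)*Real.exp (-(μF/2)*(t - t1)) := by
      rw [mul_assoc, ← Real.exp_add]
      congr 2
      ring
    rcases le_or_gt t1 t with hcase|hcase
    · rw [hexpand]
      exact hphase3 t hcase
    · have hb := hNle t ht
      rw [hexpand]
      have h1e : 1 ≤ Real.exp (-(μF/2)*(t - t1)) := by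
        rw [← Real.exp_zero]
        apply Real.exp_le_exp.2
        nlinarith
      nlinarith
  -- derive KEY by cases on which term achieves the min
  have hSmaxpos : 0 < Smax := lt_of_lt_of_le hS0pos ((hMS_lb 0).trans (hMS_ub 0))
  have hcoshid : (1 - Real.exp (-(μS*τ)))*(Real.exp (μS*τ) - 1)
      = 2*(Real.cosh (μS*τ) - 1) := by
    rw [Real.cosh_eq, Real.exp_neg]
    have := Real.exp_pos (μS*τ)
    field_simp
    ring
  have hcond_gen : ∀ c μx : ℝ, 0 < c → 0 < μx →
      ((Real.cosh (μS * τ) - 1) / (μS * τ ^ 2)) * (1 / (Real.exp 1 * β * γ)) * (2*(c/μx)) ≤ Λ →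
      (c*(1 - Real.exp (-(μS*τ)))/(Real.exp 1*β*γ*τ*Λ*μS))*(Real.exp (μS*τ) - 1) ≤ μx*τ := by
    intro c μx hc hμx hΛc
    have hD : (0:ℝ) < Real.exp 1*β*γ*τ*Λ*μS := by positivity
    have heq : (c*(1 - Real.exp (-(μS*τ)))/(Real.exp 1*β*γ*τ*Λ*μS))*(Real.exp (μS*τ) - 1)
        = 2*c*(Real.cosh (μS*τ)-1)/(Real.exp 1*β*γ*τ*Λ*μS) := by
      rw [div_mul_eq_mul_div, mul_assoc, hcoshid]
      congr 1
      ring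
    rw [heq, div_le_iff₀ hD]
    have hpos : (0:ℝ) < Real.exp 1*β*γ*μS*τ^2*μx := by positivity
    have hXexp : ((Real.cosh (μS * τ) - 1) / (μS * τ ^ 2)) * (1 / (Real.exp 1 * β * γ))
        * (2*(c/μx)) * (Real.exp 1*β*γ*μS*τ^2*μx) = 2*c*(Real.cosh (μS*τ)-1) := by
      field_simp
    have h2 := mul_le_mul_of_nonneg_right hΛc hpos.le
    rw [hXexp] at h2
    nlinarith [h2]
  have hKEYfromFM : ∀ t1, 0 ≤ t1 → (∀ t, t1 ≤ t → F t * M t ≤ δ2*(M t + F t)) →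
      (∃ t1, 0 ≤ t1 ∧ ∀ t, t1 ≤ t → ρ * Φ t ≤ (μF/4)*(M t + F t)) := by
    intro t1 ht10 hsm
    refine ⟨t1, ht10, fun t ht => ?_⟩
    have ht0 : 0 ≤ t := le_trans ht10 ht
    have hΦb : Φ t ≤ F t*M t/(γ*S0) := by
      simp only [hΦdef]
      exact small_bound_prod hβ hγ hS0pos (hMS_lb t) (hMnn t ht0) (hFnn t ht0)
    have h2 : F t*M t/(γ*S0) ≤ δ2*(M t + F t)/(γ*S0) := by
      rw [div_eq_mul_inv, div_eq_mul_inv]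
      exact mul_le_mul_of_nonneg_right (hsm t ht) (by positivity)
    have h3 : ρ*(δ2*(M t+F t)/(γ*S0)) = (μF/4)*(M t + F t) := by
      rw [hδ2def]
      field_simp
    calc ρ*Φ t ≤ ρ*(F t*M t/(γ*S0)) := mul_le_mul_of_nonneg_left hΦb hρ.le
      _ ≤ ρ*(δ2*(M t+F t)/(γ*S0)) := mul_le_mul_of_nonneg_left h2 hρ.le
      _ = (μF/4)*(M t+F t) := h3
  rcases min_cases (2 * (r * ρ / μM))
      (min (2 * ((1 - r) * ρ / μF))
        (max r (1 - r) * max ((r * ρ / μM) / r) (((1 - r) * ρ / μF) / (1 - r))))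
      with ⟨hmeq, _⟩|⟨hmeq, _⟩
  · -- CASE 1 : x = M, c = r*ρ, μx = μM
    rw [hmeq] at hΛ
    have hΛ1 : ((Real.cosh (μS * τ) - 1) / (μS * τ ^ 2)) * (1 / (Real.exp 1 * β * γ))
        * (2*((r*ρ)/μM)) ≤ Λ := hΛ
    have hcond1 := hcond_gen (r*ρ) μM (by positivity) hμM hΛ1
    obtain ⟨δ1, hδ1def⟩ : ∃ x:ℝ, x = δ2/(2*Real.exp (2*(μM*τ))) := ⟨_, rfl⟩
    have hδ1pos : 0 < δ1 := by rw [hδ1def]; positivity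
    obtain ⟨θ1, hθ1def⟩ : ∃ x:ℝ, x = γ*Smax/(δ1+γ*Smax) := ⟨_, rfl⟩
    have hθ1nn : 0 ≤ θ1 := by rw [hθ1def]; positivity
    have hθ1lt : θ1 < 1 := by
      rw [hθ1def, div_lt_one (by positivity)]
      linarith
    obtain ⟨κ1, hκ1def⟩ : ∃ x:ℝ,
        x = (r*ρ)*(1 - Real.exp (-(μS*τ)))/(Real.exp 1*β*γ*τ*Λ*μS) := ⟨_, rfl⟩
    have hκ1pos : 0 < κ1 := by rw [hκ1def]; positivity
    rw [← hκ1def] at hcond1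
    have haa : ∀ t, aafun μS τ κ1 t = (r*ρ)/(Real.exp 1*β*γ*MSper μS τ Λ t) := by
      intro t
      rw [hκ1def]
      exact hident (r*ρ) t
    have hzone : ∀ t, 0 ≤ t → δ1 < M t →
        (r*ρ*Φ t - μM*M t) < (θ1*aafun μS τ κ1 t - μM)*M t := by
      intro t ht hMt
      have hb := zone_bound_1 (Smax := Smax) hβ hγ (hMSpos t) (hMS_ub t) hδ1pos hMt
        (hFnn t ht)
      have hkey : r*ρ*Φ t < θ1*aafun μS τ κ1 t*M t := by
        rw [haa t, hθ1def]
        simp only [hΦdef]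
        calc r*ρ*(F t*M t/(M t+γ*MSper μS τ Λ t)*Real.exp (-(β*(M t+F t))))
            < r*ρ*((γ*Smax/(δ1+γ*Smax))*(M t/(Real.exp 1*β*γ*MSper μS τ Λ t))) := by
              apply mul_lt_mul_of_pos_left hb (by positivity)
          _ = γ*Smax/(δ1+γ*Smax)*((r*ρ)/(Real.exp 1*β*γ*MSper μS τ Λ t))*M t := by
              ring
      rw [show (θ1*aafun μS τ κ1 t - μM)*M t = θ1*aafun μS τ κ1 t*M t - μM*M t from by ring]
      linarith
    have htouch : ∀ t, 0 ≤ t → 0 < M t →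
        (r*ρ*Φ t - μM*M t) < (aafun μS τ κ1 t - μM)*M t := by
      intro t ht hMt
      have hb := touch_bound_1 hβ hγ (hMSpos t) hMt (hFnn t ht)
      have hkey : r*ρ*Φ t < aafun μS τ κ1 t*M t := by
        rw [haa t]
        simp only [hΦdef]
        calc r*ρ*(F t*M t/(M t+γ*MSper μS τ Λ t)*Real.exp (-(β*(M t+F t))))
            < r*ρ*(M t/(Real.exp 1*β*γ*MSper μS τ Λ t)) := by
              apply mul_lt_mul_of_pos_left hb (by positivity)
          _ = (r*ρ)/(Real.exp 1*β*γ*MSper μS τ Λ t)*M t := by ring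
      rw [show (aafun μS τ κ1 t - μM)*M t = aafun μS τ κ1 t*M t - μM*M t from by ring]
      linarith
    obtain ⟨t1, ht10, hsmall⟩ := abstract_decay μS τ κ1 μM θ1 δ1 M
      (fun t => r*ρ*Φ t - μM*M t) hμS hτ hκ1pos hμM hθ1nn hθ1lt hδ1pos hcond1
      hM' hMnn hzone htouch
    apply hKEYfromFM t1 ht10
    intro t ht
    have hMd : M t ≤ δ2 := by
      have h := hsmall t ht
      have heq2 : 2*δ1*Real.exp (2*(μM*τ)) = δ2 := by
        rw [hδ1def]
        field_simp
      linarith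
    nlinarith [hMd, hMnn t (le_trans ht10 ht), hFnn t (le_trans ht10 ht), hδ2pos,
      mul_le_mul_of_nonneg_left hMd (hFnn t (le_trans ht10 ht))]
  rw [hmeq] at hΛ
  rcases min_cases (2 * ((1 - r) * ρ / μF))
      (max r (1 - r) * max ((r * ρ / μM) / r) (((1 - r) * ρ / μF) / (1 - r)))
      with ⟨hmeq2, _⟩|⟨hmeq2, _⟩
  · -- CASE 2 : x = F, c = (1-r)*ρ, μx = μF
    rw [hmeq2] at hΛ
    have hΛ2 : ((Real.cosh (μS * τ) - 1) / (μS * τ ^ 2)) * (1 / (Real.exp 1 * β * γ))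
        * (2*(((1-r)*ρ)/μF)) ≤ Λ := hΛ
    have hcond2 := hcond_gen ((1-r)*ρ) μF (by positivity) hμF hΛ2
    obtain ⟨δ1, hδ1def⟩ : ∃ x:ℝ, x = δ2/(2*Real.exp (2*(μF*τ))) := ⟨_, rfl⟩
    have hδ1pos : 0 < δ1 := by rw [hδ1def]; positivity
    obtain ⟨θ2, hθ2def⟩ : ∃ x:ℝ,
        x = max (Real.exp (-(1/2:ℝ))*Real.exp 1/2) (γ*Smax/(1/(2*β)+γ*Smax)) := ⟨_, rfl⟩
    have hθ2nn : 0 ≤ θ2 := by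
      rw [hθ2def]
      exact le_trans (by positivity) (le_max_left _ _)
    have hθ2lt : θ2 < 1 := by
      rw [hθ2def]
      apply max_lt
      · linarith [exp_half_lt_two]
      · rw [div_lt_one (by positivity)]
        have : (0:ℝ) < 1/(2*β) := by positivity
        linarith
    obtain ⟨κ2, hκ2def⟩ : ∃ x:ℝ,
        x = ((1-r)*ρ)*(1 - Real.exp (-(μS*τ)))/(Real.exp 1*β*γ*τ*Λ*μS) := ⟨_, rfl⟩
    have hκ2pos : 0 < κ2 := by rw [hκ2def]; positivity
    rw [← hκ2def] at hcond2
    have haa : ∀ t, aafun μS τ κ2 t = ((1-r)*ρ)/(Real.exp 1*β*γ*MSper μS τ Λ t) := by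
      intro t
      rw [hκ2def]
      exact hident ((1-r)*ρ) t
    have hzone : ∀ t, 0 ≤ t → δ1 < F t →
        ((1-r)*ρ*Φ t - μF*F t) < (θ2*aafun μS τ κ2 t - μF)*F t := by
      intro t ht hFt
      have hb := zone_bound_2 (Smax := Smax) hβ hγ (hMSpos t) (hMS_ub t)
        (lt_of_lt_of_le hδ1pos hFt.le) (hMnn t ht)
      have hkey : (1-r)*ρ*Φ t < θ2*aafun μS τ κ2 t*F t := by
        rw [haa t, hθ2def]
        simp only [hΦdef]
        calc (1-r)*ρ*(F t*M t/(M t+γ*MSper μS τ Λ t)*Real.exp (-(β*(M t+F t))))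
            < (1-r)*ρ*((max (Real.exp (-(1/2:ℝ))*Real.exp 1/2) (γ*Smax/(1/(2*β)+γ*Smax)))
                *(F t/(Real.exp 1*β*γ*MSper μS τ Λ t))) := by
              apply mul_lt_mul_of_pos_left hb (by positivity)
          _ = (max (Real.exp (-(1/2:ℝ))*Real.exp 1/2) (γ*Smax/(1/(2*β)+γ*Smax)))
                *(((1-r)*ρ)/(Real.exp 1*β*γ*MSper μS τ Λ t))*F t := by ring
      rw [show (θ2*aafun μS τ κ2 t - μF)*F t = θ2*aafun μS τ κ2 t*F t - μF*F t from by ring]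
      linarith
    have htouch : ∀ t, 0 ≤ t → 0 < F t →
        ((1-r)*ρ*Φ t - μF*F t) < (aafun μS τ κ2 t - μF)*F t := by
      intro t ht hFt
      have hb := touch_bound_2 hβ hγ (hMSpos t) hFt (hMnn t ht)
      have hkey : (1-r)*ρ*Φ t < aafun μS τ κ2 t*F t := by
        rw [haa t]
        simp only [hΦdef]
        calc (1-r)*ρ*(F t*M t/(M t+γ*MSper μS τ Λ t)*Real.exp (-(β*(M t+F t))))
            < (1-r)*ρ*(F t/(Real.exp 1*β*γ*MSper μS τ Λ t)) := by
              apply mul_lt_mul_of_pos_left hb (by positivity)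
          _ = ((1-r)*ρ)/(Real.exp 1*β*γ*MSper μS τ Λ t)*F t := by ring
      rw [show (aafun μS τ κ2 t - μF)*F t = aafun μS τ κ2 t*F t - μF*F t from by ring]
      linarith
    obtain ⟨t1, ht10, hsmall⟩ := abstract_decay μS τ κ2 μF θ2 δ1 F
      (fun t => (1-r)*ρ*Φ t - μF*F t) hμS hτ hκ2pos hμF hθ2nn hθ2lt hδ1pos hcond2
      hF' hFnn hzone htouch
    apply hKEYfromFM t1 ht10
    intro t ht
    have hFd : F t ≤ δ2 := by
      have h := hsmall t ht
      have heq2 : 2*δ1*Real.exp (2*(μF*τ)) = δ2 := by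
        rw [hδ1def]
        field_simp
      linarith
    nlinarith [hFd, hMnn t (le_trans ht10 ht), hFnn t (le_trans ht10 ht), hδ2pos,
      mul_le_mul_of_nonneg_right hFd (hMnn t (le_trans ht10 ht))]
  · -- CASE 3 : x = M + F, c = ρ/4, μx = μF
    rw [hmeq2] at hΛ
    have hXnn : 0 ≤ ((Real.cosh (μS * τ) - 1) / (μS * τ ^ 2)) * (1 / (Real.exp 1 * β * γ)) := by
      positivity
    have hterm3 : 2*((ρ/4)/μF) ≤ max r (1-r) * max ((r*ρ/μM)/r) (((1-r)*ρ/μF)/(1-r)) := by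
      have h1 : ((1-r)*ρ/μF)/(1-r) = ρ/μF := by
        field_simp
      have h2 : ρ/μF ≤ max ((r*ρ/μM)/r) (((1-r)*ρ/μF)/(1-r)) := by
        rw [h1]
        exact le_max_right _ _
      have h3 : (1:ℝ)/2 ≤ max r (1-r) := by
        rcases le_total r (1-r) with h|h
        · rw [max_eq_right h]; linarith
        · rw [max_eq_left h]; linarith
      calc 2*((ρ/4)/μF) = (1/2)*(ρ/μF) := by ring
        _ ≤ max r (1-r) * max ((r*ρ/μM)/r) (((1-r)*ρ/μF)/(1-r)) :=
            mul_le_mul h3 h2 (by positivity) (by linarith)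
    have hΛ3 : ((Real.cosh (μS * τ) - 1) / (μS * τ ^ 2)) * (1 / (Real.exp 1 * β * γ))
        * (2*((ρ/4)/μF)) ≤ Λ :=
      le_trans (mul_le_mul_of_nonneg_left hterm3 hXnn) hΛ
    have hcond3 := hcond_gen (ρ/4) μF (by positivity) hμF hΛ3
    obtain ⟨δ1, hδ1def⟩ : ∃ x:ℝ, x = δ2/(2*Real.exp (2*(μF*τ))) := ⟨_, rfl⟩
    have hδ1pos : 0 < δ1 := by rw [hδ1def]; positivity
    obtain ⟨θ3, hθ3def⟩ : ∃ x:ℝ, x = max (3/4:ℝ) (γ*Smax/(δ1/8+γ*Smax)) := ⟨_, rfl⟩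
    have hθ3nn : 0 ≤ θ3 := by
      rw [hθ3def]
      exact le_trans (by norm_num) (le_max_left _ _)
    have hθ3lt : θ3 < 1 := by
      rw [hθ3def]
      apply max_lt (by norm_num)
      rw [div_lt_one (by positivity)]
      have : (0:ℝ) < δ1/8 := by positivity
      linarith
    obtain ⟨κ3, hκ3def⟩ : ∃ x:ℝ,
        x = (ρ/4)*(1 - Real.exp (-(μS*τ)))/(Real.exp 1*β*γ*τ*Λ*μS) := ⟨_, rfl⟩
    have hκ3pos : 0 < κ3 := by rw [hκ3def]; positivity
    rw [← hκ3def] at hcond3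
    have haa : ∀ t, aafun μS τ κ3 t = (ρ/4)/(Real.exp 1*β*γ*MSper μS τ Λ t) := by
      intro t
      rw [hκ3def]
      exact hident (ρ/4) t
    have hNnn : ∀ t, 0 ≤ t → 0 ≤ M t + F t := by
      intro t ht
      have := hMnn t ht; have := hFnn t ht; linarith
    have hμ1 : ∀ t, 0 ≤ t → μF*(M t + F t) ≤ μM*M t + μF*F t := by
      intro t ht
      nlinarith [hMnn t ht]
    have hzone : ∀ t, 0 ≤ t → δ1 < M t + F t →
        (ρ*Φ t - (μM*M t + μF*F t)) < (θ3*aafun μS τ κ3 t - μF)*(M t + F t) := by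
      intro t ht hNt
      have hb := zone_bound_3 (Smax := Smax) hβ hγ (hMSpos t) (hMS_ub t) hδ1pos hNt
        (hMnn t ht) (hFnn t ht)
      have hkey : ρ*Φ t < θ3*aafun μS τ κ3 t*(M t + F t) := by
        rw [haa t, hθ3def]
        simp only [hΦdef]
        calc ρ*(F t*M t/(M t+γ*MSper μS τ Λ t)*Real.exp (-(β*(M t+F t))))
            < ρ*((max (3/4:ℝ) (γ*Smax/(δ1/8+γ*Smax)))
                *((M t + F t)/(4*(Real.exp 1*β*γ*MSper μS τ Λ t)))) := by
              apply mul_lt_mul_of_pos_left hb hρ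
          _ = (max (3/4:ℝ) (γ*Smax/(δ1/8+γ*Smax)))
                *((ρ/4)/(Real.exp 1*β*γ*MSper μS τ Λ t))*(M t + F t) := by ring
      rw [show (θ3*aafun μS τ κ3 t - μF)*(M t + F t)
          = θ3*aafun μS τ κ3 t*(M t + F t) - μF*(M t + F t) from by ring]
      linarith [hμ1 t ht]
    have htouch : ∀ t, 0 ≤ t → 0 < M t + F t →
        (ρ*Φ t - (μM*M t + μF*F t)) < (aafun μS τ κ3 t - μF)*(M t + F t) := by
      intro t ht hNt
      have hb := touch_bound_3 hβ hγ (hMSpos t) (hMnn t ht) (hFnn t ht) hNt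
      have hkey : ρ*Φ t < aafun μS τ κ3 t*(M t + F t) := by
        rw [haa t]
        simp only [hΦdef]
        calc ρ*(F t*M t/(M t+γ*MSper μS τ Λ t)*Real.exp (-(β*(M t+F t))))
            < ρ*((M t + F t)/(4*(Real.exp 1*β*γ*MSper μS τ Λ t))) := by
              apply mul_lt_mul_of_pos_left hb hρ
          _ = (ρ/4)/(Real.exp 1*β*γ*MSper μS τ Λ t)*(M t + F t) := by ring
      rw [show (aafun μS τ κ3 t - μF)*(M t + F t)
          = aafun μS τ κ3 t*(M t + F t) - μF*(M t + F t) from by ring]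
      linarith [hμ1 t ht]
    obtain ⟨t1, ht10, hsmall⟩ := abstract_decay μS τ κ3 μF θ3 δ1 (fun u => M u + F u)
      (fun t => ρ*Φ t - (μM*M t + μF*F t)) hμS hτ hκ3pos hμF hθ3nn hθ3lt hδ1pos hcond3
      hN' hNnn hzone htouch
    apply hKEYfromFM t1 ht10
    intro t ht
    have hNd : M t + F t ≤ δ2 := by
      have h := hsmall t ht
      have heq2 : 2*δ1*Real.exp (2*(μF*τ)) = δ2 := by
        rw [hδ1def]
        field_simp
      linarith
    nlinarith [hNd, hMnn t (le_trans ht10 ht), hFnn t (le_trans ht10 ht), hδ2pos,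
      sq_nonneg (M t - F t)]
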